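/- Fix n ≥ 1, s ∈ (0,1), p ≥ -1/(n+3), and a, b ≥ 0 with ab ≠ 0. Then M_s^p(a,b) · M_s^{1/2}(1/(1-s)², 1/s²) ≥ M_s^{p/(2p+1)}(a/(1-s)², b/s²). -/

import Mathlib

open Real

/-- The `p`-mean `M_s^p(a,b)`. -/
noncomputable def pMean (s : ℝ) (p : EReal) (a b : ℝ) : ℝ :=
  if p = ⊥ then min a b
  else if p = ⊤ then (if a * b = 0 then 0 else max a b)
  else if p = 0 then a ^ (1 - s) * b ^ s
  else if a * b = 0 then 0
  else ((1 - s) * a ^ p.toReal + s * b ^ p.toReal) ^ p.toReal⁻¹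

private lemma holder2 {α β : ℝ} (hαβ : α.HolderConjugate β)
    {w1 w2 x1 x2 y1 y2 : ℝ} (hw1 : 0 ≤ w1) (hw2 : 0 ≤ w2)
    (hx1 : 0 ≤ x1) (hx2 : 0 ≤ x2) (hy1 : 0 ≤ y1) (hy2 : 0 ≤ y2) :
    w1 * (x1 * y1) + w2 * (x2 * y2) ≤
      (w1 * x1 ^ α + w2 * x2 ^ α) ^ α⁻¹ * (w1 * y1 ^ β + w2 * y2 ^ β) ^ β⁻¹ := by
  have hα0 : 0 < α := hαβ.pos
  have hβ0 : 0 < β := hαβ.symm.pos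
  have hsum : α⁻¹ + β⁻¹ = 1 := hαβ.inv_add_inv_eq_one
  have key := Real.inner_le_Lp_mul_Lq_of_nonneg (s := (Finset.univ : Finset (Fin 2)))
      (f := ![w1 ^ α⁻¹ * x1, w2 ^ α⁻¹ * x2]) (g := ![w1 ^ β⁻¹ * y1, w2 ^ β⁻¹ * y2]) hαβ
      (by intro i _; fin_cases i <;>
        simp [mul_nonneg, Real.rpow_nonneg, hw1, hw2, hx1, hx2])
      (by intro i _; fin_cases i <;>
        simp [mul_nonneg, Real.rpow_nonneg, hw1, hw2, hy1, hy2])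
  simp only [Fin.sum_univ_two, Matrix.cons_val_zero, Matrix.cons_val_one, Matrix.head_cons]
    at key
  have e1 : ∀ w : ℝ, 0 ≤ w → w ^ α⁻¹ * w ^ β⁻¹ = w := by
    intro w hw
    rw [← Real.rpow_add' hw (by rw [hsum]; norm_num), hsum, Real.rpow_one]
  have e2 : ∀ w x : ℝ, 0 ≤ w → 0 ≤ x → (w ^ α⁻¹ * x) ^ α = w * x ^ α := by
    intro w x hw hx
    rw [Real.mul_rpow (Real.rpow_nonneg hw _) hx, ← Real.rpow_mul hw,
      inv_mul_cancel₀ (ne_of_gt hα0), Real.rpow_one]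
  have e3 : ∀ w y : ℝ, 0 ≤ w → 0 ≤ y → (w ^ β⁻¹ * y) ^ β = w * y ^ β := by
    intro w y hw hy
    rw [Real.mul_rpow (Real.rpow_nonneg hw _) hy, ← Real.rpow_mul hw,
      inv_mul_cancel₀ (ne_of_gt hβ0), Real.rpow_one]
  calc w1 * (x1 * y1) + w2 * (x2 * y2)
      = w1 ^ α⁻¹ * x1 * (w1 ^ β⁻¹ * y1) + w2 ^ α⁻¹ * x2 * (w2 ^ β⁻¹ * y2) := by
        rw [show w1 ^ α⁻¹ * x1 * (w1 ^ β⁻¹ * y1) = w1 ^ α⁻¹ * w1 ^ β⁻¹ * (x1 * y1) by ring,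
          show w2 ^ α⁻¹ * x2 * (w2 ^ β⁻¹ * y2) = w2 ^ α⁻¹ * w2 ^ β⁻¹ * (x2 * y2) by ring,
          e1 w1 hw1, e1 w2 hw2]
    _ ≤ ((w1 ^ α⁻¹ * x1) ^ α + (w2 ^ α⁻¹ * x2) ^ α) ^ (1/α) *
        ((w1 ^ β⁻¹ * y1) ^ β + (w2 ^ β⁻¹ * y2) ^ β) ^ (1/β) := key
    _ = (w1 * x1 ^ α + w2 * x2 ^ α) ^ α⁻¹ * (w1 * y1 ^ β + w2 * y2 ^ β) ^ β⁻¹ := by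
        rw [e2 w1 x1 hw1 hx1, e2 w2 x2 hw2 hx2, e3 w1 y1 hw1 hy1, e3 w2 y2 hw2 hy2,
          one_div, one_div]

private lemma inv_sq_rpow {t : ℝ} (ht : 0 < t) (e : ℝ) :
    (1 / t ^ 2 : ℝ) ^ e = t ^ (-2 * e) := by
  rw [one_div, ← Real.rpow_natCast t 2, ← Real.rpow_neg ht.le, ← Real.rpow_mul ht.le]
  norm_num

theorem pMean_bbl_key (n : ℕ) (hn : 1 ≤ n) (s : ℝ) (hs : s ∈ Set.Ioo (0:ℝ) 1)
    (p : ℝ) (hp : -(1 / ((n : ℝ) + 3)) ≤ p) (a b : ℝ) (ha : 0 ≤ a) (hb : 0 ≤ b)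
    (hab : a * b ≠ 0) :
    pMean s (p : EReal) a b * pMean s (((1 : ℝ) / 2 : ℝ) : EReal) (1 / (1 - s) ^ 2) (1 / s ^ 2) ≥
      pMean s ((p / (2 * p + 1) : ℝ) : EReal) (a / (1 - s) ^ 2) (b / s ^ 2) := by
  obtain ⟨hs0, hs1⟩ := hs
  have h1s : (0:ℝ) < 1 - s := by linarith
  have ha' : 0 < a := lt_of_le_of_ne ha (by rintro rfl; simp at hab)
  have hb' : 0 < b := lt_of_le_of_ne hb (by rintro rfl; simp at hab)
  have hn4 : (4:ℝ) ≤ (n:ℝ) + 3 := by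
    have : (1:ℝ) ≤ (n:ℝ) := by exact_mod_cast hn
    linarith
  have hp4 : -(1/4 : ℝ) ≤ p := by
    refine le_trans ?_ hp
    have : (1 / ((n:ℝ)+3)) ≤ 1/4 := by
      apply one_div_le_one_div_of_le <;> linarith
    linarith
  have h2p1 : 0 < 2 * p + 1 := by linarith
  -- the middle factor equals 4
  have hmid : pMean s (((1 : ℝ) / 2 : ℝ) : EReal) (1 / (1 - s) ^ 2) (1 / s ^ 2) = 4 := by
    rw [pMean]
    rw [if_neg (EReal.coe_ne_bot _), if_neg (EReal.coe_ne_top _),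
      if_neg (by exact_mod_cast (by norm_num : ((1:ℝ)/2) ≠ 0)),
      if_neg (by positivity)]
    rw [EReal.toReal_coe]
    rw [inv_sq_rpow h1s, inv_sq_rpow hs0]
    rw [show (-2 * ((1:ℝ)/2)) = -1 by norm_num]
    rw [Real.rpow_neg_one, Real.rpow_neg_one]
    rw [mul_inv_cancel₀ (ne_of_gt h1s), mul_inv_cancel₀ (ne_of_gt hs0)]
    norm_num
  rw [hmid]
  set A := a / (1 - s) ^ 2 with hA
  set B := b / s ^ 2 with hB
  have hA' : 0 < A := by positivity
  have hB' : 0 < B := by positivity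
  have hAa : A = a * (1 / (1 - s) ^ 2) := by rw [hA]; ring
  have hBb : B = b * (1 / s ^ 2) := by rw [hB]; ring
  by_cases hp0 : p = 0
  · subst hp0
    simp only [zero_div, pMean]
    norm_num
    -- goal : A ^ (1 - s) * B ^ s ≤ a ^ (1 - s) * b ^ s * 4
    have hgm := Real.geom_mean_le_arith_mean2_weighted h1s.le hs0.le
      (inv_nonneg.2 h1s.le) (inv_nonneg.2 hs0.le) (by ring)
    rw [mul_inv_cancel₀ (ne_of_gt h1s), mul_inv_cancel₀ (ne_of_gt hs0),
      Real.inv_rpow h1s.le, Real.inv_rpow hs0.le, ← Real.rpow_neg h1s.le,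
      ← Real.rpow_neg hs0.le] at hgm
    -- hgm : (1-s)^(-(1-s)) * s^(-s) ≤ 1 + 1
    have hArw : A ^ (1 - s) = a ^ (1 - s) * (1 - s) ^ (-2 * (1 - s)) := by
      rw [hAa, Real.mul_rpow ha (by positivity), inv_sq_rpow h1s]
    have hBrw : B ^ s = b ^ s * s ^ (-2 * s) := by
      rw [hBb, Real.mul_rpow hb (by positivity), inv_sq_rpow hs0]
    rw [hArw, hBrw]
    have hsq1 : (1 - s) ^ (-2 * (1 - s)) = ((1 - s) ^ (-(1 - s))) ^ 2 := by
      rw [← Real.rpow_two, ← Real.rpow_mul h1s.le]; ring_nf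
    have hsq2 : s ^ (-2 * s) = (s ^ (-s)) ^ 2 := by
      rw [← Real.rpow_two, ← Real.rpow_mul hs0.le]; ring_nf
    rw [hsq1, hsq2]
    have h1 : (0:ℝ) < (1 - s) ^ (-(1 - s)) := Real.rpow_pos_of_pos h1s _
    have h2 : (0:ℝ) < s ^ (-s) := Real.rpow_pos_of_pos hs0 _
    have h3 : (0:ℝ) < a ^ (1 - s) := Real.rpow_pos_of_pos ha' _
    have h4 : (0:ℝ) < b ^ s := Real.rpow_pos_of_pos hb' _
    have key : ((1 - s) ^ (-(1 - s))) ^ 2 * (s ^ (-s)) ^ 2 ≤ 4 := by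
      have h5 : ((1 - s) ^ (-(1 - s)) * s ^ (-s)) ^ 2 ≤ 2 ^ 2 :=
        pow_le_pow_left₀ (by positivity) (by linarith) 2
      rw [mul_pow] at h5
      linarith
    calc a ^ (1 - s) * ((1 - s) ^ (-(1 - s))) ^ 2 * (b ^ s * (s ^ (-s)) ^ 2)
        = a ^ (1 - s) * b ^ s * (((1 - s) ^ (-(1 - s))) ^ 2 * (s ^ (-s)) ^ 2) := by ring
      _ ≤ a ^ (1 - s) * b ^ s * 4 := by
          apply mul_le_mul_of_nonneg_left key (by positivity)
  · -- p ≠ 0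
    set r := p / (2 * p + 1) with hr
    have hr0 : r ≠ 0 := div_ne_zero hp0 (ne_of_gt h2p1)
    rw [pMean, pMean, if_neg (EReal.coe_ne_bot _), if_neg (EReal.coe_ne_top _),
      if_neg (by exact_mod_cast hp0), if_neg hab, EReal.toReal_coe,
      if_neg (EReal.coe_ne_bot _), if_neg (EReal.coe_ne_top _),
      if_neg (by exact_mod_cast hr0), if_neg (by positivity), EReal.toReal_coe]
    set X := (1 - s) * a ^ p + s * b ^ p with hXdef
    set Y := (1 - s) * A ^ r + s * B ^ r with hYdef
    have hX : 0 < X := by positivity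
    have hY : 0 < Y := by positivity
    have hArw : A ^ r = a ^ r * (1 - s) ^ (-2 * r) := by
      rw [hAa, Real.mul_rpow ha (by positivity), inv_sq_rpow h1s]
    have hBrw : B ^ r = b ^ r * s ^ (-2 * r) := by
      rw [hBb, Real.mul_rpow hb (by positivity), inv_sq_rpow hs0]
    rcases lt_or_gt_of_ne hp0 with hpneg | hppos
    · -- p < 0, r < 0
      have hrneg : r < 0 := div_neg_of_neg_of_pos hpneg h2p1
      have h2p : (2 * p : ℝ) ≠ 0 := ne_of_lt (by linarith)
      have hconj : (1 / (2 * p + 1)).HolderConjugate (-(2 * p)⁻¹) := by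
        rw [Real.holderConjugate_iff]; constructor
        · exact one_lt_one_div h2p1 (by linarith)
        · rw [one_div, inv_inv, inv_neg, inv_inv]; ring
      have key := holder2 hconj h1s.le hs0.le
        (Real.rpow_nonneg hA'.le p) (Real.rpow_nonneg hB'.le p)
        (Real.rpow_nonneg h1s.le (2*p)) (Real.rpow_nonneg hs0.le (2*p))
      have hApa : A ^ p * (1 - s) ^ (2*p) = a ^ p := by
        rw [hAa, Real.mul_rpow ha (by positivity), inv_sq_rpow h1s, mul_assoc,
          ← Real.rpow_add h1s, show -2*p + 2*p = 0 by ring, Real.rpow_zero, mul_one]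
      have hBpb : B ^ p * s ^ (2*p) = b ^ p := by
        rw [hBb, Real.mul_rpow hb (by positivity), inv_sq_rpow hs0, mul_assoc,
          ← Real.rpow_add hs0, show -2*p + 2*p = 0 by ring, Real.rpow_zero, mul_one]
      have eA : (A ^ p) ^ (1 / (2 * p + 1)) = A ^ r := by
        rw [← Real.rpow_mul hA'.le]
        congr 1
        rw [hr]; ring
      have eB : (B ^ p) ^ (1 / (2 * p + 1)) = B ^ r := by
        rw [← Real.rpow_mul hB'.le]
        congr 1
        rw [hr]; ring
      have ec : ((1 - s) ^ (2*p)) ^ (-(2 * p)⁻¹) = (1 - s)⁻¹ := by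
        rw [← Real.rpow_mul h1s.le, mul_neg, mul_inv_cancel₀ h2p, Real.rpow_neg_one]
      have ed : (s ^ (2*p)) ^ (-(2 * p)⁻¹) = s⁻¹ := by
        rw [← Real.rpow_mul hs0.le, mul_neg, mul_inv_cancel₀ h2p, Real.rpow_neg_one]
      rw [hApa, hBpb, eA, eB, ec, ed, mul_inv_cancel₀ (ne_of_gt h1s),
        mul_inv_cancel₀ (ne_of_gt hs0), one_div, inv_inv, inv_neg, inv_inv] at key
      -- key : X ≤ Y ^ (2*p+1) * (1+1) ^ (-(2*p))
      have key2 : (Y ^ (2*p+1) * ((1:ℝ)+1) ^ (-(2*p))) ^ p⁻¹ ≤ X ^ p⁻¹ :=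
        Real.rpow_le_rpow_of_nonpos hX key (inv_nonpos.2 hpneg.le)
      rw [Real.mul_rpow (by positivity) (by positivity), ← Real.rpow_mul hY.le,
        ← Real.rpow_mul (by norm_num : (0:ℝ) ≤ 1+1),
        show (2*p+1) * p⁻¹ = r⁻¹ by rw [hr]; field_simp,
        show -(2*p) * p⁻¹ = -2 by field_simp,
        show ((1:ℝ)+1) = 2 by norm_num] at key2
      have h14 : (2:ℝ) ^ (-2 : ℝ) = 1/4 := by
        rw [Real.rpow_neg (by norm_num), Real.rpow_two]; norm_num
      rw [h14] at key2
      -- key2 : Y ^ r⁻¹ * (1/4) ≤ X ^ p⁻¹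
      linarith
    · -- p > 0, r > 0
      have hrpos : 0 < r := div_pos hppos h2p1
      have hconj : (2 * p + 1).HolderConjugate (2 * r)⁻¹ := by
        rw [Real.holderConjugate_iff]; constructor
        · linarith
        · rw [inv_inv, hr]; field_simp; ring
      have key := holder2 hconj h1s.le hs0.le
        (Real.rpow_nonneg ha r) (Real.rpow_nonneg hb r)
        (Real.rpow_nonneg h1s.le (-2*r)) (Real.rpow_nonneg hs0.le (-2*r))
      rw [← hArw, ← hBrw] at key
      have ea : (a ^ r) ^ (2 * p + 1) = a ^ p := by
        rw [← Real.rpow_mul ha]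
        congr 1
        rw [hr]; field_simp
      have eb : (b ^ r) ^ (2 * p + 1) = b ^ p := by
        rw [← Real.rpow_mul hb]
        congr 1
        rw [hr]; field_simp
      have ec : ((1 - s) ^ (-2 * r)) ^ (2 * r)⁻¹ = (1 - s)⁻¹ := by
        rw [← Real.rpow_mul h1s.le, show -2 * r * (2 * r)⁻¹ = -1 by
          field_simp, Real.rpow_neg_one]
      have ed : (s ^ (-2 * r)) ^ (2 * r)⁻¹ = s⁻¹ := by
        rw [← Real.rpow_mul hs0.le, show -2 * r * (2 * r)⁻¹ = -1 by
          field_simp, Real.rpow_neg_one]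
      rw [ea, eb, ec, ed, inv_inv, mul_inv_cancel₀ (ne_of_gt h1s),
        mul_inv_cancel₀ (ne_of_gt hs0)] at key
      -- key : Y ≤ X ^ (2*p+1)⁻¹ * (1+1) ^ (2*r)
      have key2 : Y ^ r⁻¹ ≤ X ^ p⁻¹ * 4 := by
        calc Y ^ r⁻¹ ≤ (X ^ (2*p+1)⁻¹ * (1+1:ℝ) ^ (2*r)) ^ r⁻¹ :=
              Real.rpow_le_rpow hY.le key (by positivity)
          _ = X ^ p⁻¹ * 4 := by
              rw [Real.mul_rpow (by positivity) (by positivity),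
                ← Real.rpow_mul hX.le, ← Real.rpow_mul (by norm_num : (0:ℝ) ≤ 1+1),
                show (2*p+1)⁻¹ * r⁻¹ = p⁻¹ by rw [hr]; field_simp,
                show 2 * r * r⁻¹ = 2 by field_simp,
                show ((1:ℝ)+1) = 2 by norm_num, Real.rpow_two]
              norm_num
      linarith
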